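/- Let (Ω, P) and (Ω', P') be probability spaces, let Z be a measurable space, and let X: Ω → Z, X': Ω' → Z be random elements and R: Ω → {1,2,...}, R': Ω' → {1,2,...} random variables such that R and R' have the same distribution. Fix r ≥ 1 and δ̂ ≥ 0 with P[R > r] ≤ δ̂. Suppose ε_1 ≤ ε_2 ≤ ... ≤ ε_r and δ_1 ≤ δ_2 ≤ ... ≤ δ_r are nonnegative reals such that for every i ∈ {1,...,r} with P[R = i] > 0 and every measurable set S ⊆ Z, P[X ∈ S | R = i] ≤ e^{ε_i}·P'[X' ∈ S | R' = i] + δ_i. Then for every measurable set S ⊆ Z, P[X ∈ S] ≤ e^{ε_r}·P'[X' ∈ S] + δ_r + δ̂. -/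

import Mathlib

open MeasureTheory ProbabilityTheory

/-- Composition with a random number of rounds: if `R` and `R'` have the
same distribution, `P[R > r] ≤ δ̂`, the per-round guarantees `(ε_i, δ_i)` are nondecreasing
and nonnegative on `{1,…,r}`, and conditionally on `R = i` (whenever this event has positive
probability) the output `X` is `(ε_i, δ_i)`-close to `X'` conditioned on `R' = i`, then
unconditionally `P[X ∈ S] ≤ e^{ε_r}·P'[X' ∈ S] + δ_r + δ̂` for every measurable `S`. -/
theorem dp_composition_random_rounds
    {Ω Ω' Z : Type*} [MeasurableSpace Ω] [MeasurableSpace Ω'] [MeasurableSpace Z]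
    (P : Measure Ω) (P' : Measure Ω')
    [IsProbabilityMeasure P] [IsProbabilityMeasure P']
    (X : Ω → Z) (X' : Ω' → Z) (R : Ω → ℕ) (R' : Ω' → ℕ)
    (hX : Measurable X) (hX' : Measurable X') (hR : Measurable R) (hR' : Measurable R')
    (hRpos : ∀ ω, 1 ≤ R ω) (hR'pos : ∀ ω, 1 ≤ R' ω)
    (hsame : Measure.map R P = Measure.map R' P')
    (r : ℕ) (hr : 1 ≤ r) (δhat : ℝ) (hδhat : 0 ≤ δhat)
    (htail : (P {ω | r < R ω}).toReal ≤ δhat)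
    (ε δ : ℕ → ℝ)
    (hεnonneg : ∀ i, 1 ≤ i → i ≤ r → 0 ≤ ε i)
    (hδnonneg : ∀ i, 1 ≤ i → i ≤ r → 0 ≤ δ i)
    (hεmono : ∀ i j, 1 ≤ i → i ≤ j → j ≤ r → ε i ≤ ε j)
    (hδmono : ∀ i j, 1 ≤ i → i ≤ j → j ≤ r → δ i ≤ δ j)
    (hcond : ∀ i, 1 ≤ i → i ≤ r → 0 < P {ω | R ω = i} →
      ∀ S : Set Z, MeasurableSet S →
        ((P[|{ω | R ω = i}]) (X ⁻¹' S)).toReal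
          ≤ Real.exp (ε i) * ((P'[|{ω | R' ω = i}]) (X' ⁻¹' S)).toReal + δ i) :
    ∀ S : Set Z, MeasurableSet S →
      (P (X ⁻¹' S)).toReal
        ≤ Real.exp (ε r) * (P' (X' ⁻¹' S)).toReal + δ r + δhat := by
  intro S hS
  -- notation
  have hAmeas : ∀ i : ℕ, MeasurableSet {ω | R ω = i} :=
    fun i => hR (measurableSet_singleton i)
  have hA'meas : ∀ i : ℕ, MeasurableSet {ω | R' ω = i} :=
    fun i => hR' (measurableSet_singleton i)
  have hPA : ∀ i : ℕ, P {ω | R ω = i} = P' {ω | R' ω = i} := by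
    intro i
    have h1 : P {ω | R ω = i} = (Measure.map R P) {i} := by
      rw [Measure.map_apply hR (measurableSet_singleton i)]; rfl
    have h2 : P' {ω | R' ω = i} = (Measure.map R' P') {i} := by
      rw [Measure.map_apply hR' (measurableSet_singleton i)]; rfl
    rw [h1, h2, hsame]
  -- per-round bound
  have key : ∀ i ∈ Finset.Icc 1 r,
      (P (X ⁻¹' S ∩ {ω | R ω = i})).toReal
        ≤ Real.exp (ε r) * (P' (X' ⁻¹' S ∩ {ω | R' ω = i})).toReal
          + δ r * (P {ω | R ω = i}).toReal := by
    intro i hi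
    rw [Finset.mem_Icc] at hi
    obtain ⟨hi1, hir⟩ := hi
    have hδr : 0 ≤ δ r := hδnonneg r hr le_rfl
    by_cases hp : P {ω | R ω = i} = 0
    · have h0 : P (X ⁻¹' S ∩ {ω | R ω = i}) = 0 :=
        measure_mono_null Set.inter_subset_right hp
      rw [h0]
      have := ENNReal.toReal_nonneg (a := P' (X' ⁻¹' S ∩ {ω | R' ω = i}))
      positivity
    · have hppos : 0 < P {ω | R ω = i} := (pos_iff_ne_zero).2 hp
      have hcondineq := hcond i hi1 hir hppos S hS
      have hp'pos : 0 < P' {ω | R' ω = i} := (hPA i) ▸ hppos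
      set p : ℝ := (P {ω | R ω = i}).toReal with hpdef
      have hptm : p = (P' {ω | R' ω = i}).toReal := by rw [hpdef, hPA i]
      have hprpos : 0 < p :=
        ENNReal.toReal_pos hppos.ne' (measure_ne_top _ _)
      have hc1 : ((P[|{ω | R ω = i}]) (X ⁻¹' S)).toReal
          = (P (X ⁻¹' S ∩ {ω | R ω = i})).toReal / p := by
        rw [ProbabilityTheory.cond_apply (hAmeas i), ENNReal.toReal_mul,
          ENNReal.toReal_inv, Set.inter_comm]
        ring
      have hc2 : ((P'[|{ω | R' ω = i}]) (X' ⁻¹' S)).toReal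
          = (P' (X' ⁻¹' S ∩ {ω | R' ω = i})).toReal / p := by
        rw [ProbabilityTheory.cond_apply (hA'meas i), ENNReal.toReal_mul,
          ENNReal.toReal_inv, Set.inter_comm, hptm]
        ring
      rw [hc1, hc2] at hcondineq
      set a : ℝ := (P (X ⁻¹' S ∩ {ω | R ω = i})).toReal
      set b : ℝ := (P' (X' ⁻¹' S ∩ {ω | R' ω = i})).toReal with hbdef
      have hb0 : 0 ≤ b := ENNReal.toReal_nonneg
      have h1 : a ≤ Real.exp (ε i) * b + δ i * p := by
        have := mul_le_mul_of_nonneg_right hcondineq hprpos.le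
        rw [div_mul_cancel₀ _ hprpos.ne'] at this
        calc a ≤ (Real.exp (ε i) * (b / p) + δ i) * p := this
          _ = Real.exp (ε i) * b + δ i * p := by
              field_simp
      refine h1.trans (add_le_add ?_ ?_)
      · exact mul_le_mul_of_nonneg_right
          (Real.exp_le_exp.2 (hεmono i r hi1 hir le_rfl)) hb0
      · exact mul_le_mul_of_nonneg_right (hδmono i r hi1 hir le_rfl) hprpos.le
  -- decomposition of the event
  have hunion : X ⁻¹' S
      = (⋃ i ∈ Finset.Icc 1 r, X ⁻¹' S ∩ {ω | R ω = i})
        ∪ (X ⁻¹' S ∩ {ω | r < R ω}) := by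
    ext ω
    simp only [Set.mem_union, Set.mem_iUnion, Set.mem_inter_iff, Set.mem_preimage,
      Set.mem_setOf_eq, Finset.mem_Icc, exists_prop]
    constructor
    · intro h
      rcases le_or_gt (R ω) r with h1 | h1
      · exact Or.inl ⟨R ω, ⟨hRpos ω, h1⟩, h, rfl⟩
      · exact Or.inr ⟨h, h1⟩
    · rintro (⟨i, _, h, _⟩ | ⟨h, _⟩) <;> exact h
  have hpd : ((Finset.Icc 1 r : Finset ℕ) : Set ℕ).PairwiseDisjoint
      (fun i => X ⁻¹' S ∩ {ω | R ω = i}) := by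
    intro i _ j _ hij
    apply Set.disjoint_left.2
    rintro ω ⟨_, h1⟩ ⟨_, h2⟩
    exact hij (h1.symm.trans h2)
  have hpd' : ((Finset.Icc 1 r : Finset ℕ) : Set ℕ).PairwiseDisjoint
      (fun i => X' ⁻¹' S ∩ {ω | R' ω = i}) := by
    intro i _ j _ hij
    apply Set.disjoint_left.2
    rintro ω ⟨_, h1⟩ ⟨_, h2⟩
    exact hij (h1.symm.trans h2)
  have hBmeas : ∀ i ∈ Finset.Icc 1 r, MeasurableSet (X ⁻¹' S ∩ {ω | R ω = i}) :=
    fun i _ => (hX hS).inter (hAmeas i)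
  have hB'meas : ∀ i ∈ Finset.Icc 1 r, MeasurableSet (X' ⁻¹' S ∩ {ω | R' ω = i}) :=
    fun i _ => (hX' hS).inter (hA'meas i)
  have hTmeas : MeasurableSet (X ⁻¹' S ∩ {ω | r < R ω}) :=
    (hX hS).inter (hR measurableSet_Ioi)
  have hdisjBT : Disjoint (⋃ i ∈ Finset.Icc 1 r, X ⁻¹' S ∩ {ω | R ω = i})
      (X ⁻¹' S ∩ {ω | r < R ω}) := by
    apply Set.disjoint_left.2
    intro ω hω hω'
    simp only [Set.mem_iUnion, Finset.mem_Icc, exists_prop, Set.mem_inter_iff,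
      Set.mem_setOf_eq] at hω hω'
    obtain ⟨i, ⟨_, hir⟩, _, hRi⟩ := hω
    omega
  have hsplit : P (X ⁻¹' S)
      = ∑ i ∈ Finset.Icc 1 r, P (X ⁻¹' S ∩ {ω | R ω = i})
        + P (X ⁻¹' S ∩ {ω | r < R ω}) := by
    conv_lhs => rw [hunion]
    rw [measure_union hdisjBT hTmeas, measure_biUnion_finset hpd hBmeas]
  have hsplitR : (P (X ⁻¹' S)).toReal
      = (∑ i ∈ Finset.Icc 1 r, (P (X ⁻¹' S ∩ {ω | R ω = i})).toReal)
        + (P (X ⁻¹' S ∩ {ω | r < R ω})).toReal := by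
    rw [hsplit, ENNReal.toReal_add (by
        exact (ENNReal.sum_lt_top.2 (fun i _ => measure_lt_top _ _)).ne)
      (measure_ne_top _ _), ENNReal.toReal_sum (fun i _ => measure_ne_top _ _)]
  -- sum of P' terms is at most P'(X'⁻¹ S)
  have hsumb : ∑ i ∈ Finset.Icc 1 r, (P' (X' ⁻¹' S ∩ {ω | R' ω = i})).toReal
      ≤ (P' (X' ⁻¹' S)).toReal := by
    rw [← ENNReal.toReal_sum (fun i _ => measure_ne_top _ _)]
    apply ENNReal.toReal_mono (measure_ne_top _ _)
    rw [← measure_biUnion_finset hpd' hB'meas]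
    exact measure_mono (Set.iUnion₂_subset fun i _ => Set.inter_subset_left)
  -- sum of P {R = i} is at most 1
  have hsump : ∑ i ∈ Finset.Icc 1 r, (P {ω | R ω = i}).toReal ≤ 1 := by
    rw [← ENNReal.toReal_sum (fun i _ => measure_ne_top _ _)]
    have : ∑ i ∈ Finset.Icc 1 r, P {ω | R ω = i} ≤ 1 := by
      rw [← measure_biUnion_finset (f := fun i => {ω | R ω = i})
        (by
          intro i _ j _ hij
          apply Set.disjoint_left.2
          intro ω h1 h2
          exact hij (h1.symm.trans h2))
        (fun i _ => hAmeas i)]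
      exact (measure_mono (Set.subset_univ _)).trans_eq measure_univ
    calc (∑ i ∈ Finset.Icc 1 r, P {ω | R ω = i}).toReal
        ≤ (1 : ENNReal).toReal := ENNReal.toReal_mono (by simp) this
      _ = 1 := by simp
  have hδr : 0 ≤ δ r := hδnonneg r hr le_rfl
  have htail' : (P (X ⁻¹' S ∩ {ω | r < R ω})).toReal ≤ δhat :=
    le_trans (ENNReal.toReal_mono (measure_ne_top _ _)
      (measure_mono Set.inter_subset_right)) htail
  calc (P (X ⁻¹' S)).toReal
      = (∑ i ∈ Finset.Icc 1 r, (P (X ⁻¹' S ∩ {ω | R ω = i})).toReal)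
        + (P (X ⁻¹' S ∩ {ω | r < R ω})).toReal := hsplitR
    _ ≤ (∑ i ∈ Finset.Icc 1 r,
          (Real.exp (ε r) * (P' (X' ⁻¹' S ∩ {ω | R' ω = i})).toReal
            + δ r * (P {ω | R ω = i}).toReal)) + δhat :=
        add_le_add (Finset.sum_le_sum key) htail'
    _ = Real.exp (ε r) * (∑ i ∈ Finset.Icc 1 r, (P' (X' ⁻¹' S ∩ {ω | R' ω = i})).toReal)
        + δ r * (∑ i ∈ Finset.Icc 1 r, (P {ω | R ω = i}).toReal) + δhat := by
        rw [Finset.sum_add_distrib, ← Finset.mul_sum, ← Finset.mul_sum]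
    _ ≤ Real.exp (ε r) * (P' (X' ⁻¹' S)).toReal + δ r * 1 + δhat := by
        refine add_le_add (add_le_add ?_ ?_) le_rfl
        · exact mul_le_mul_of_nonneg_left hsumb (Real.exp_pos _).le
        · exact mul_le_mul_of_nonneg_left hsump hδr
    _ = Real.exp (ε r) * (P' (X' ⁻¹' S)).toReal + δ r + δhat := by ring
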